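/- With V, E, F, H as in the sl_2 action on basis vectors |A_1,A_2⟩ (0 ≤ A_1 ≤ A_2 ≤ A_1+2ℓ+1), define X|A_1,A_2⟩ = ((A_2-A_1-2ℓ-1)/(A_2-A_1-(2ℓ+1)/2))|A_1,A_2+1⟩ + ((A_2-A_1)/(A_2-A_1-(2ℓ+1)/2))|A_1+1,A_2⟩ and Y|A_1,A_2⟩ = ((A_2-A_1)((2ℓ+1)/2-A_2)ℏ/(A_2-A_1-(2ℓ+1)/2))|A_1,A_2-1⟩ + (A_1(2ℓ+1-A_2+A_1)ℏ/(A_2-A_1-(2ℓ+1)/2))|A_1-1,A_2⟩. Then [X,Y] = 2ℏ on V. -/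

import Mathlib

attribute [local instance] Classical.propDecidable

noncomputable section

/-- The coefficient field `ℂ(ℏ)`. -/
abbrev Fh : Type := RatFunc ℂ

/-- The generator `ℏ` of `ℂ(ℏ)`. -/
def hb : Fh := RatFunc.X

/-- Admissibility of the index `(A₁, A₂)`: `0 ≤ A₁ ≤ A₂ ≤ A₁ + 2ℓ + 1`. -/
def Adm (ℓ : ℕ) (A : ℤ × ℤ) : Prop :=
  0 ≤ A.1 ∧ A.1 ≤ A.2 ∧ A.2 ≤ A.1 + (2 * ℓ + 1)

/-- The vector space `V` with basis `|A₁, A₂⟩` indexed by admissible pairs. -/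
abbrev V (ℓ : ℕ) : Type := {A : ℤ × ℤ // Adm ℓ A} →₀ Fh

/-- The basis vector `|A₁, A₂⟩`, with out-of-range indices giving `0`. -/
def ket (ℓ : ℕ) (A : ℤ × ℤ) : V ℓ :=
  if h : Adm ℓ A then Finsupp.single ⟨A, h⟩ 1 else 0

/-- `E |A₁,A₂⟩ = |A₁+1, A₂+1⟩`. -/
def opE (ℓ : ℕ) : V ℓ →ₗ[Fh] V ℓ :=
  Finsupp.lsum Fh fun A =>
    LinearMap.toSpanSingleton Fh (V ℓ) (ket ℓ (A.1.1 + 1, A.1.2 + 1))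

/-- `F |A₁,A₂⟩ = A₁ ((2ℓ+1)/2 - A₂) ℏ² |A₁-1, A₂-1⟩`. -/
def opF (ℓ : ℕ) : V ℓ →ₗ[Fh] V ℓ :=
  Finsupp.lsum Fh fun A =>
    LinearMap.toSpanSingleton Fh (V ℓ)
      (((((A.1.1 : ℚ) * ((2 * ℓ + 1) / 2 - (A.1.2 : ℚ)) : ℚ) : Fh) * hb ^ 2) •
        ket ℓ (A.1.1 - 1, A.1.2 - 1))

/-- `H |A₁,A₂⟩ = (A₁ + A₂ + 1 - (2ℓ+1)/2) ℏ |A₁, A₂⟩`. -/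
def opH (ℓ : ℕ) : V ℓ →ₗ[Fh] V ℓ :=
  Finsupp.lsum Fh fun A =>
    LinearMap.toSpanSingleton Fh (V ℓ)
      (((((A.1.1 : ℚ) + (A.1.2 : ℚ) + 1 - (2 * ℓ + 1) / 2 : ℚ) : Fh) * hb) •
        ket ℓ (A.1.1, A.1.2))

/-- `X |A₁,A₂⟩ = ((A₂-A₁-2ℓ-1)/(A₂-A₁-(2ℓ+1)/2)) |A₁,A₂+1⟩
              + ((A₂-A₁)/(A₂-A₁-(2ℓ+1)/2)) |A₁+1,A₂⟩`. -/
def opX (ℓ : ℕ) : V ℓ →ₗ[Fh] V ℓ :=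
  Finsupp.lsum Fh fun A =>
    LinearMap.toSpanSingleton Fh (V ℓ)
      (((((A.1.2 : ℚ) - (A.1.1 : ℚ) - (2 * ℓ + 1)) /
            ((A.1.2 : ℚ) - (A.1.1 : ℚ) - (2 * ℓ + 1) / 2) : ℚ) : Fh) •
          ket ℓ (A.1.1, A.1.2 + 1) +
        ((((A.1.2 : ℚ) - (A.1.1 : ℚ)) /
            ((A.1.2 : ℚ) - (A.1.1 : ℚ) - (2 * ℓ + 1) / 2) : ℚ) : Fh) •
          ket ℓ (A.1.1 + 1, A.1.2))

/-- `Y |A₁,A₂⟩ = ((A₂-A₁)((2ℓ+1)/2-A₂)ℏ/(A₂-A₁-(2ℓ+1)/2)) |A₁,A₂-1⟩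
              + (A₁(2ℓ+1-A₂+A₁)ℏ/(A₂-A₁-(2ℓ+1)/2)) |A₁-1,A₂⟩`. -/
def opY (ℓ : ℕ) : V ℓ →ₗ[Fh] V ℓ :=
  Finsupp.lsum Fh fun A =>
    LinearMap.toSpanSingleton Fh (V ℓ)
      ((((((A.1.2 : ℚ) - (A.1.1 : ℚ)) * ((2 * ℓ + 1) / 2 - (A.1.2 : ℚ)) /
            ((A.1.2 : ℚ) - (A.1.1 : ℚ) - (2 * ℓ + 1) / 2) : ℚ) : Fh) * hb) •
          ket ℓ (A.1.1, A.1.2 - 1) +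
        (((((A.1.1 : ℚ) * (2 * ℓ + 1 - (A.1.2 : ℚ) + (A.1.1 : ℚ))) /
            ((A.1.2 : ℚ) - (A.1.1 : ℚ) - (2 * ℓ + 1) / 2) : ℚ) : Fh) * hb) •
          ket ℓ (A.1.1 - 1, A.1.2))

instance : CharZero Fh := charZero_of_injective_algebraMap (algebraMap ℂ Fh).injective

-- coefficient functions
def cX1 (ℓ : ℕ) (A1 A2 : ℤ) : Fh :=
  ((((A2 : ℚ) - (A1 : ℚ) - (2 * ℓ + 1)) /
      ((A2 : ℚ) - (A1 : ℚ) - (2 * ℓ + 1) / 2) : ℚ) : Fh)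

def cX2 (ℓ : ℕ) (A1 A2 : ℤ) : Fh :=
  ((((A2 : ℚ) - (A1 : ℚ)) /
      ((A2 : ℚ) - (A1 : ℚ) - (2 * ℓ + 1) / 2) : ℚ) : Fh)

def cY1 (ℓ : ℕ) (A1 A2 : ℤ) : Fh :=
  (((((A2 : ℚ) - (A1 : ℚ)) * ((2 * ℓ + 1) / 2 - (A2 : ℚ)) /
      ((A2 : ℚ) - (A1 : ℚ) - (2 * ℓ + 1) / 2) : ℚ) : Fh) * hb)

def cY2 (ℓ : ℕ) (A1 A2 : ℤ) : Fh :=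
  ((((((A1 : ℚ) * (2 * ℓ + 1 - (A2 : ℚ) + (A1 : ℚ))) /
      ((A2 : ℚ) - (A1 : ℚ) - (2 * ℓ + 1) / 2) : ℚ) : Fh) * hb))

lemma opX_ket {ℓ : ℕ} {A1 A2 : ℤ} (h : Adm ℓ (A1, A2)) :
    opX ℓ (ket ℓ (A1, A2)) =
      cX1 ℓ A1 A2 • ket ℓ (A1, A2 + 1) + cX2 ℓ A1 A2 • ket ℓ (A1 + 1, A2) := by
  rw [ket, dif_pos h]
  unfold opX
  rw [Finsupp.lsum_single, LinearMap.toSpanSingleton_apply, one_smul]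
  rfl

lemma opY_ket {ℓ : ℕ} {A1 A2 : ℤ} (h : Adm ℓ (A1, A2)) :
    opY ℓ (ket ℓ (A1, A2)) =
      cY1 ℓ A1 A2 • ket ℓ (A1, A2 - 1) + cY2 ℓ A1 A2 • ket ℓ (A1 - 1, A2) := by
  rw [ket, dif_pos h]
  unfold opY
  rw [Finsupp.lsum_single, LinearMap.toSpanSingleton_apply, one_smul]
  rfl
-- zero coefficient lemmas
lemma cast_hb_zero (q : ℚ) (h : q = 0) : (q : Fh) * hb = 0 := by simp [h]

lemma cX1_zero {ℓ : ℕ} {A1 A2 : ℤ} (hA : Adm ℓ (A1, A2)) (h : ¬ Adm ℓ (A1, A2 + 1)) :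
    cX1 ℓ A1 A2 = 0 := by
  have h2 : A2 = A1 + (2 * ℓ + 1) := by
    simp only [Adm] at hA h; push_neg at h; omega
  have hq : ((A2 : ℚ) - (A1 : ℚ) - (2 * (ℓ:ℚ) + 1)) = 0 := by
    have : (A2 : ℚ) = (A1 : ℚ) + (2 * (ℓ:ℚ) + 1) := by exact_mod_cast h2
    rw [this]; ring
  unfold cX1
  rw [show ((A2 : ℚ) - (A1 : ℚ) - (2 * ℓ + 1)) / ((A2 : ℚ) - (A1 : ℚ) - (2 * ℓ + 1) / 2) = 0 from by
    rw [div_eq_zero_iff]; left; exact hq]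
  simp

lemma cX2_zero {ℓ : ℕ} {A1 A2 : ℤ} (hA : Adm ℓ (A1, A2)) (h : ¬ Adm ℓ (A1 + 1, A2)) :
    cX2 ℓ A1 A2 = 0 := by
  have h2 : A2 = A1 := by simp only [Adm] at hA h; push_neg at h; omega
  have hq : ((A2 : ℚ) - (A1 : ℚ)) = 0 := by
    have : (A2 : ℚ) = (A1 : ℚ) := by exact_mod_cast h2
    rw [this]; ring
  unfold cX2
  rw [show ((A2 : ℚ) - (A1 : ℚ)) / ((A2 : ℚ) - (A1 : ℚ) - (2 * ℓ + 1) / 2) = 0 from by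
    rw [div_eq_zero_iff]; left; exact hq]
  simp

lemma cY1_zero {ℓ : ℕ} {A1 A2 : ℤ} (hA : Adm ℓ (A1, A2)) (h : ¬ Adm ℓ (A1, A2 - 1)) :
    cY1 ℓ A1 A2 = 0 := by
  have h2 : A2 = A1 := by simp only [Adm] at hA h; push_neg at h; omega
  have hq : ((A2 : ℚ) - (A1 : ℚ)) = 0 := by
    have : (A2 : ℚ) = (A1 : ℚ) := by exact_mod_cast h2
    rw [this]; ring
  unfold cY1
  apply cast_hb_zero
  rw [div_eq_zero_iff]; left; rw [hq]; ring

lemma cY2_zero {ℓ : ℕ} {A1 A2 : ℤ} (hA : Adm ℓ (A1, A2)) (h : ¬ Adm ℓ (A1 - 1, A2)) :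
    cY2 ℓ A1 A2 = 0 := by
  have h2 : A1 = 0 ∨ A2 = A1 + (2 * ℓ + 1) := by
    simp only [Adm] at hA h; push_neg at h; omega
  unfold cY2
  apply cast_hb_zero
  rw [div_eq_zero_iff]; left
  rcases h2 with h2 | h2
  · rw [h2]; simp
  · have : (A2 : ℚ) = (A1 : ℚ) + (2 * (ℓ:ℚ) + 1) := by exact_mod_cast h2
    rw [this]; ring

lemma smul_opX_ket {ℓ : ℕ} {A1 A2 : ℤ} (c : Fh) (hc : ¬ Adm ℓ (A1, A2) → c = 0) :
    c • opX ℓ (ket ℓ (A1, A2)) =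
      (c * cX1 ℓ A1 A2) • ket ℓ (A1, A2 + 1) + (c * cX2 ℓ A1 A2) • ket ℓ (A1 + 1, A2) := by
  by_cases h : Adm ℓ (A1, A2)
  · rw [opX_ket h, smul_add, smul_smul, smul_smul]
  · rw [hc h]; simp

lemma smul_opY_ket {ℓ : ℕ} {A1 A2 : ℤ} (c : Fh) (hc : ¬ Adm ℓ (A1, A2) → c = 0) :
    c • opY ℓ (ket ℓ (A1, A2)) =
      (c * cY1 ℓ A1 A2) • ket ℓ (A1, A2 - 1) + (c * cY2 ℓ A1 A2) • ket ℓ (A1 - 1, A2) := by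
  by_cases h : Adm ℓ (A1, A2)
  · rw [opY_ket h, smul_add, smul_smul, smul_smul]
  · rw [hc h]; simp

lemma den_ne_q (m : ℤ) (ℓ : ℕ) : (m : ℚ) - (2 * (ℓ:ℚ) + 1) / 2 ≠ 0 := by
  intro h
  have h2 : (2 * m : ℚ) = 2 * (ℓ:ℚ) + 1 := by push_cast; linarith
  have h3 : (2 * m : ℤ) = 2 * (ℓ:ℤ) + 1 := by exact_mod_cast h2
  omega

set_option maxHeartbeats 1000000 in
/-- the operators `X` and `Y` satisfy `[X, Y] = 2ℏ` on `V`. -/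
theorem stmt7 (ℓ : ℕ) :
    opX ℓ ∘ₗ opY ℓ - opY ℓ ∘ₗ opX ℓ = (2 * hb) • (LinearMap.id : V ℓ →ₗ[Fh] V ℓ) := by
  apply Finsupp.lhom_ext
  rintro ⟨⟨A1, A2⟩, hA⟩ c
  have hket : (Finsupp.single (⟨(A1, A2), hA⟩ : {A // Adm ℓ A}) c) = c • ket ℓ (A1, A2) := by
    rw [ket, dif_pos hA, Finsupp.smul_single, smul_eq_mul, mul_one]
  rw [hket, map_smul, map_smul]
  congr 1
  simp only [LinearMap.sub_apply, LinearMap.comp_apply, LinearMap.smul_apply,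
    LinearMap.id_apply]
  rw [opY_ket hA, opX_ket hA, map_add, map_add, map_smul, map_smul, map_smul, map_smul,
    smul_opX_ket _ (cY1_zero hA), smul_opX_ket _ (cY2_zero hA),
    smul_opY_ket _ (cX1_zero hA), smul_opY_ket _ (cX2_zero hA)]
  simp only [sub_add_cancel, add_sub_cancel_right]
  -- nonzero denominators over ℚ
  have d0 : (A2:ℚ) - (A1:ℚ) - (2 * (ℓ:ℚ) + 1) / 2 ≠ 0 := fun h =>
    den_ne_q (A2 - A1) ℓ (by push_cast; linarith)
  have dm : (A2:ℚ) - 1 - (A1:ℚ) - (2 * (ℓ:ℚ) + 1) / 2 ≠ 0 := fun h =>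
    den_ne_q (A2 - 1 - A1) ℓ (by push_cast; linarith)
  have dp : (A2:ℚ) + 1 - (A1:ℚ) - (2 * (ℓ:ℚ) + 1) / 2 ≠ 0 := fun h =>
    den_ne_q (A2 + 1 - A1) ℓ (by push_cast; linarith)
  have key1 : (((A2:ℚ) - A1) * ((2*(ℓ:ℚ)+1)/2 - A2) / ((A2:ℚ) - A1 - (2*(ℓ:ℚ)+1)/2)) *
        (((A2:ℚ) - 1 - A1) / ((A2:ℚ) - 1 - A1 - (2*(ℓ:ℚ)+1)/2)) =
      (((A2:ℚ) - A1) / ((A2:ℚ) - A1 - (2*(ℓ:ℚ)+1)/2)) *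
        (((A2:ℚ) - 1 - A1) * ((2*(ℓ:ℚ)+1)/2 - A2) / ((A2:ℚ) - 1 - A1 - (2*(ℓ:ℚ)+1)/2)) := by
    field_simp [d0, dm, dp]
  have key2 : ((A1:ℚ) * (2*(ℓ:ℚ)+1 - A2 + A1) / ((A2:ℚ) - A1 - (2*(ℓ:ℚ)+1)/2)) *
        (((A2:ℚ) - A1 + 1 - (2*(ℓ:ℚ)+1)) / ((A2:ℚ) + 1 - A1 - (2*(ℓ:ℚ)+1)/2)) =
      (((A2:ℚ) - A1 - (2*(ℓ:ℚ)+1)) / ((A2:ℚ) - A1 - (2*(ℓ:ℚ)+1)/2)) *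
        ((A1:ℚ) * (2*(ℓ:ℚ)+1 - (A2+1) + A1) / ((A2:ℚ) + 1 - A1 - (2*(ℓ:ℚ)+1)/2)) := by
    field_simp [d0, dm, dp]
    ring
  have key3 : (((A2:ℚ) - A1) * ((2*(ℓ:ℚ)+1)/2 - A2) / ((A2:ℚ) - A1 - (2*(ℓ:ℚ)+1)/2)) *
        (((A2:ℚ) - 1 - A1 - (2*(ℓ:ℚ)+1)) / ((A2:ℚ) - 1 - A1 - (2*(ℓ:ℚ)+1)/2)) +
      ((A1:ℚ) * (2*(ℓ:ℚ)+1 - A2 + A1) / ((A2:ℚ) - A1 - (2*(ℓ:ℚ)+1)/2)) *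
        (((A2:ℚ) - A1 + 1) / ((A2:ℚ) + 1 - A1 - (2*(ℓ:ℚ)+1)/2)) -
      (((A2:ℚ) - A1 - (2*(ℓ:ℚ)+1)) / ((A2:ℚ) - A1 - (2*(ℓ:ℚ)+1)/2)) *
        (((A2:ℚ) + 1 - A1) * ((2*(ℓ:ℚ)+1)/2 - (A2+1)) / ((A2:ℚ) + 1 - A1 - (2*(ℓ:ℚ)+1)/2)) -
      (((A2:ℚ) - A1) / ((A2:ℚ) - A1 - (2*(ℓ:ℚ)+1)/2)) *
        (((A1:ℚ)+1) * (2*(ℓ:ℚ)+1 - A2 + (A1+1)) / ((A2:ℚ) - 1 - A1 - (2*(ℓ:ℚ)+1)/2)) = 2 := by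
    have h0m : ((A2:ℚ) - A1 - (2*(ℓ:ℚ)+1)/2) * ((A2:ℚ) - 1 - A1 - (2*(ℓ:ℚ)+1)/2) ≠ 0 :=
      mul_ne_zero d0 dm
    have h0p : ((A2:ℚ) - A1 - (2*(ℓ:ℚ)+1)/2) * ((A2:ℚ) + 1 - A1 - (2*(ℓ:ℚ)+1)/2) ≠ 0 :=
      mul_ne_zero d0 dp
    have hre : ∀ t1 t2 t3 t4 : ℚ, t1 + t2 - t3 - t4 = (t1 - t4) + (t2 - t3) := by
      intros; ring
    simp only [div_mul_div_comm]
    rw [hre, div_sub_div_same, div_sub_div_same, div_add_div _ _ h0m h0p,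
      div_eq_iff (mul_ne_zero h0m h0p)]
    ring
  have e1 : cY1 ℓ A1 A2 * cX2 ℓ A1 (A2 - 1) = cX2 ℓ A1 A2 * cY1 ℓ (A1 + 1) A2 := by
    unfold cY1 cX2
    have h := congrArg (fun q : ℚ => (q : Fh)) key1
    push_cast at h ⊢
    linear_combination hb * h
  have e2 : cY2 ℓ A1 A2 * cX1 ℓ (A1 - 1) A2 = cX1 ℓ A1 A2 * cY2 ℓ A1 (A2 + 1) := by
    unfold cY2 cX1
    have h := congrArg (fun q : ℚ => (q : Fh)) key2
    push_cast at h ⊢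
    linear_combination hb * h
  have e3 : cY1 ℓ A1 A2 * cX1 ℓ A1 (A2 - 1) =
      cX1 ℓ A1 A2 * cY1 ℓ A1 (A2 + 1) + cX2 ℓ A1 A2 * cY2 ℓ (A1 + 1) A2 + 2 * hb -
        cY2 ℓ A1 A2 * cX2 ℓ (A1 - 1) A2 := by
    unfold cY1 cY2 cX1 cX2
    have h := congrArg (fun q : ℚ => (q : Fh)) key3
    push_cast at h ⊢
    linear_combination hb * h
  rw [e1, e2, e3]
  simp only [add_smul, sub_smul]
  abel
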